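/- Let {Ψₙ}_{n≥1} be an i.i.d. sequence of random Lipschitz functions ℝ → ℝ with E[log(Lip(Ψ₁))] < 0, satisfying A_n t + B_n − D_n ≤ Ψ_n(t) ≤ A_n t⁺ + B_n⁺ + D_n for all t, with A_n, D_n ≥ 0, and E[log⁺|B ± D|] < ∞. Then the backward iterations Ψ₁ ∘ Ψ₂ ∘ ⋯ ∘ Ψₙ(R₀) converge almost surely as n → ∞ to a limit R that does not depend on the initial value R₀; consequently the Markov chain R_{n+1} = Ψ_{n+1}(R_n) has a unique stationary distribution, which solves R =_d Ψ(R) with R independent of Ψ. -/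

import Mathlib

open MeasureTheory ProbabilityTheory Filter Real Set

/-- Tail function of a distribution on ℝ. -/
noncomputable def tailFun (ν : MeasureTheory.Measure ℝ) (x : ℝ) : ℝ := (ν (Set.Ioi x)).toReal

/-- A distribution on ℝ is long-tailed. -/
def IsLongTailed (ν : MeasureTheory.Measure ℝ) : Prop :=
  (∀ x : ℝ, 0 < tailFun ν x) ∧
    ∀ y : ℝ, Filter.Tendsto (fun x => tailFun ν (x + y) / tailFun ν x) Filter.atTop (nhds 1)

/-- Convolution of two measures on ℝ. -/
noncomputable def convMeas (μ ν : MeasureTheory.Measure ℝ) : MeasureTheory.Measure ℝ :=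
  (μ.prod ν).map (fun p => p.1 + p.2)

/-- A distribution on ℝ is subexponential. -/
def IsSubexponential (ν : MeasureTheory.Measure ℝ) : Prop :=
  IsLongTailed ν ∧
    Filter.Tendsto (fun x => tailFun (convMeas ν ν) x / tailFun ν x) Filter.atTop (nhds 2)

/-- Backward iteration: `backIter Ψ ω n = Ψ 0 ω ∘ Ψ 1 ω ∘ ⋯ ∘ Ψ (n-1) ω`. -/
noncomputable def backIter {Ω : Type*} (Ψ : ℕ → Ω → ℝ → ℝ) (ω : Ω) : ℕ → ℝ → ℝ
  | 0 => id
  | n + 1 => fun t => backIter Ψ ω n (Ψ n ω t)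



section AuxLaw

variable {α β : Type*} [MeasurableSpace α] [MeasurableSpace β]

lemma aux_lint_tendsto (ρ : Measure α) [IsProbabilityMeasure ρ]
    (F : BoundedContinuousFunction ℝ NNReal)
    {u : ℕ → α → ℝ} {u' : α → ℝ} (hu : ∀ n, AEMeasurable (u n) ρ)
    (hut : ∀ᵐ x ∂ρ, Tendsto (fun n => u n x) atTop (nhds (u' x))) :
    Tendsto (fun n => ∫⁻ x, F (u n x) ∂ρ) atTop (nhds (∫⁻ x, F (u' x) ∂ρ)) := by
  refine tendsto_lintegral_of_dominated_convergence' (fun _ => (nndist F 0 : ENNReal))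
    (fun n => ?_) (fun n => ?_) ?_ ?_
  · exact (measurable_coe_nnreal_ennreal.comp
      (F.continuous.measurable)).comp_aemeasurable (hu n)
  · refine Eventually.of_forall fun x => ?_
    have h1 : F (u n x) ≤ nndist F 0 := by
      have := BoundedContinuousFunction.nndist_coe_le_nndist (f := F) (g := 0) (u n x)
      simpa [NNReal.nndist_zero_eq_val'] using this
    exact ENNReal.coe_le_coe.mpr h1
  · simp only [MeasureTheory.lintegral_const, measure_univ, mul_one]
    exact ENNReal.coe_ne_top
  · filter_upwards [hut] with x hx
    exact (ENNReal.continuous_coe.tendsto _).comp ((F.continuous.tendsto _).comp hx)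

lemma aux_mapEq_of_tendsto (μ : Measure α) (ν : Measure β)
    [IsProbabilityMeasure μ] [IsProbabilityMeasure ν]
    {f : ℕ → α → ℝ} {g : ℕ → β → ℝ} {f' : α → ℝ} {g' : β → ℝ}
    (hf : ∀ n, AEMeasurable (f n) μ) (hg : ∀ n, AEMeasurable (g n) ν)
    (hf' : AEMeasurable f' μ) (hg' : AEMeasurable g' ν)
    (hft : ∀ᵐ a ∂μ, Tendsto (fun n => f n a) atTop (nhds (f' a)))
    (hgt : ∀ᵐ b ∂ν, Tendsto (fun n => g n b) atTop (nhds (g' b)))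
    (heq : ∀ n, μ.map (f n) = ν.map (g n)) :
    μ.map f' = ν.map g' := by
  have hPf : IsProbabilityMeasure (μ.map f') := Measure.isProbabilityMeasure_map hf'
  refine ext_of_forall_lintegral_eq_of_IsFiniteMeasure (fun F => ?_)
  have h1 : Tendsto (fun n => ∫⁻ x, F (f n x) ∂μ) atTop (nhds (∫⁻ x, F (f' x) ∂μ)) :=
    aux_lint_tendsto μ F hf hft
  have h2 : Tendsto (fun n => ∫⁻ x, F (g n x) ∂ν) atTop (nhds (∫⁻ x, F (g' x) ∂ν)) :=
    aux_lint_tendsto ν F hg hgt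
  have hFm : Measurable fun y : ℝ => (F y : ENNReal) :=
    measurable_coe_nnreal_ennreal.comp F.continuous.measurable
  have h3 : ∀ n, ∫⁻ x, F (f n x) ∂μ = ∫⁻ x, F (g n x) ∂ν := by
    intro n
    rw [← lintegral_map' hFm.aemeasurable (hf n), ← lintegral_map' hFm.aemeasurable (hg n),
      heq n]
  simp_rw [h3] at h1
  have h4 := tendsto_nhds_unique h1 h2
  rw [← lintegral_map' hFm.aemeasurable hf', ← lintegral_map' hFm.aemeasurable hg'] at h4
  exact h4

end AuxLaw


section Round

/-- dyadic rounding -/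
noncomputable def rnd (m : ℕ) (x : ℝ) : ℝ := (⌊x * 2 ^ m⌋ : ℤ) / 2 ^ m

lemma rnd_dist (m : ℕ) (x : ℝ) : |rnd m x - x| ≤ (2 ^ m)⁻¹ := by
  have h2 : (0:ℝ) < 2 ^ m := by positivity
  have hinv : (2 ^ m : ℝ)⁻¹ * 2 ^ m = 1 := inv_mul_cancel₀ h2.ne'
  have hf1 : ((⌊x * 2 ^ m⌋ : ℤ) : ℝ) ≤ x * 2 ^ m := Int.floor_le _
  have hf2 : x * 2 ^ m - 1 < ((⌊x * 2 ^ m⌋ : ℤ) : ℝ) := Int.sub_one_lt_floor _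
  rw [rnd, abs_sub_le_iff]
  constructor
  · rw [sub_le_iff_le_add, div_le_iff₀ h2]
    nlinarith
  · rw [sub_le_iff_le_add, ← sub_le_iff_le_add', le_div_iff₀ h2]
    nlinarith

lemma rnd_tendsto {x : ℝ} {u : ℕ → ℝ} (hu : Tendsto u atTop (nhds x)) :
    Tendsto (fun m => rnd m (u m)) atTop (nhds x) := by
  have h0 : Tendsto (fun m => rnd m (u m) - u m) atTop (nhds 0) := by
    apply squeeze_zero_norm (fun m => rnd_dist m (u m))
    have := tendsto_pow_atTop_nhds_zero_of_lt_one (r := (2:ℝ)⁻¹) (by norm_num) (by norm_num)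
    simpa [inv_pow] using this
  have := h0.add hu
  simpa using this

lemma measurable_rnd_eval (m : ℕ) :
    Measurable (fun p : (ℝ → ℝ) × ℝ => p.1 (rnd m p.2)) := by
  have h1 : Measurable (fun q : (ℝ → ℝ) × ℤ => q.1 ((q.2 : ℝ) / 2 ^ m)) := by
    exact measurable_from_prod_countable_left
      (f := fun q : (ℝ → ℝ) × ℤ => q.1 ((q.2 : ℝ) / 2 ^ m))
      (fun j => show Measurable fun x : ℝ → ℝ => x ((j : ℝ) / 2 ^ m) from measurable_pi_apply _)
  have h2 : Measurable (fun p : (ℝ → ℝ) × ℝ => (p.1, ⌊p.2 * 2 ^ m⌋)) :=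
    measurable_fst.prodMk ((Int.measurable_floor).comp (measurable_snd.mul measurable_const))
  have : (fun p : (ℝ → ℝ) × ℝ => p.1 (rnd m p.2)) =
      (fun q : (ℝ → ℝ) × ℤ => q.1 ((q.2 : ℝ) / 2 ^ m)) ∘
        (fun p : (ℝ → ℝ) × ℝ => (p.1, ⌊p.2 * 2 ^ m⌋)) := rfl
  rw [this]
  exact h1.comp h2

end Round

section FinComp

/-- composition of a tuple of functions -/
def finComp : ∀ {k : ℕ}, (Fin k → ℝ → ℝ) → ℝ → ℝ
  | 0, _, t => t
  | (_ + 1), F, t => F 0 (finComp (Fin.tail F) t)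

/-- rounded composition of a tuple of functions -/
noncomputable def finRComp (m : ℕ) : ∀ {k : ℕ}, (Fin k → ℝ → ℝ) → ℝ → ℝ
  | 0, _, t => t
  | (_ + 1), F, t => F 0 (rnd m (finRComp m (Fin.tail F) t))

lemma measurable_finRComp (m k : ℕ) :
    Measurable (fun p : (Fin k → (ℝ → ℝ)) × ℝ => finRComp m p.1 p.2) := by
  induction k with
  | zero => exact measurable_snd
  | succ k ih =>
      have htail : Measurable (fun p : (Fin (k+1) → (ℝ → ℝ)) × ℝ =>
          ((Fin.tail p.1 : Fin k → ℝ → ℝ), p.2)) := by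
        refine Measurable.prodMk ?_ measurable_snd
        exact measurable_pi_lambda _ (fun i => (measurable_pi_apply i.succ).comp measurable_fst)
      show Measurable fun p : (Fin (k+1) → (ℝ → ℝ)) × ℝ =>
        p.1 0 (rnd m (finRComp m (Fin.tail p.1) p.2))
      exact (measurable_rnd_eval m).comp
        (((measurable_pi_apply 0).comp measurable_fst).prodMk (ih.comp htail))

lemma finRComp_tendsto : ∀ {k : ℕ} {F : Fin k → ℝ → ℝ}, (∀ i, Continuous (F i)) →
    ∀ {u : ℕ → ℝ} {t : ℝ}, Tendsto u atTop (nhds t) →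
    Tendsto (fun m => finRComp m F (u m)) atTop (nhds (finComp F t)) := by
  intro k
  induction k with
  | zero => intro F _ u t hu; exact hu
  | succ k ih =>
      intro F hF u t hu
      have h1 : Tendsto (fun m => finRComp m (Fin.tail F) (u m)) atTop
          (nhds (finComp (Fin.tail F) t)) := ih (fun i => hF i.succ) hu
      have h2 := rnd_tendsto h1
      exact ((hF 0).tendsto _).comp h2

lemma finComp_succ_last : ∀ {k : ℕ} (F : Fin (k+1) → ℝ → ℝ) (t : ℝ),
    finComp F t = finComp (fun i : Fin k => F i.castSucc) (F (Fin.last k) t) := by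
  intro k
  induction k with
  | zero => intro F t; rfl
  | succ k ih =>
      intro F t
      show F 0 (finComp (Fin.tail F) t) = F 0 (finComp (Fin.tail fun i => F i.castSucc)
        (F (Fin.last (k+1)) t))
      rw [ih (Fin.tail F) t]
      have h1 : (Fin.tail fun i : Fin (k+1) => F i.castSucc) =
          (fun i : Fin k => Fin.tail F i.castSucc) := by
        funext i
        simp only [Fin.tail, Fin.succ_castSucc]
      have h2 : Fin.tail F (Fin.last k) = F (Fin.last (k+1)) := by
        simp [Fin.tail, Fin.succ_last]
      rw [h1, h2]

end FinComp


section TupleLaw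

variable {Ω G : Type*} [MeasurableSpace Ω] [MeasurableSpace G]

lemma aux_indepFun_tuple (P : Measure Ω) [IsProbabilityMeasure P]
    (f : ℕ → Ω → G) (hmeas : ∀ n, Measurable (f n))
    (hind : iIndepFun f P)
    {k : ℕ} (σ : Fin k → ℕ) (j : ℕ) (hj : ∀ i, σ i ≠ j) :
    IndepFun (f j) (fun ω (i : Fin k) => f (σ i) ω) P := by
  classical
  have hdisj : Disjoint ({j} : Finset ℕ) (Finset.image σ Finset.univ) := by
    simp only [Finset.disjoint_singleton_left, Finset.mem_image, not_exists, not_and]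
    exact fun i _ hi => hj i hi
  have h := hind.indepFun_finset {j} (Finset.image σ Finset.univ) hdisj hmeas
  have hφS : Measurable (fun v : ∀ _ : ({j} : Finset ℕ), G =>
      v ⟨j, Finset.mem_singleton_self j⟩) := measurable_pi_apply _
  have hφT : Measurable (fun v : ∀ _ : (Finset.image σ Finset.univ : Finset ℕ), G =>
      fun i : Fin k => v ⟨σ i, Finset.mem_image_of_mem σ (Finset.mem_univ i)⟩) :=
    measurable_pi_lambda _ (fun i => measurable_pi_apply _)
  exact h.comp hφS hφT

lemma aux_tuple_law (P : Measure Ω) [IsProbabilityMeasure P]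
    (f : ℕ → Ω → G) (hmeas : ∀ n, Measurable (f n))
    (hind : iIndepFun f P)
    (hident : ∀ n, IdentDistrib (f n) (f 0) P P) :
    ∀ (k : ℕ) (σ : Fin k → ℕ), Function.Injective σ →
    P.map (fun ω (i : Fin k) => f (σ i) ω) = Measure.pi (fun _ : Fin k => P.map (f 0)) := by
  have hP0 : IsProbabilityMeasure (P.map (f 0)) := Measure.isProbabilityMeasure_map (hmeas 0).aemeasurable
  intro k
  induction k with
  | zero =>
      intro σ hσ
      have h1 : IsProbabilityMeasure (P.map (fun ω (i : Fin 0) => f (σ i) ω)) :=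
        Measure.isProbabilityMeasure_map (measurable_pi_lambda _ fun i => hmeas _).aemeasurable
      have h2 : IsProbabilityMeasure (Measure.pi (fun _ : Fin 0 => P.map (f 0))) := inferInstance
      ext s hs
      rcases s.eq_empty_or_nonempty with rfl | ⟨y, hy⟩
      · simp
      · have hsu : s = Set.univ := Set.eq_univ_of_forall (fun x => by
          rwa [show x = y from Subsingleton.elim x y])
        rw [hsu, measure_univ, measure_univ]
  | succ k ih =>
      intro σ hσ
      set μ0 := P.map (f 0) with hμ0
      set e := MeasurableEquiv.piFinSuccAbove (fun _ : Fin (k+1) => G) 0 with he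
      have hσs : Function.Injective (fun i : Fin k => σ i.succ) :=
        fun a b hab => Fin.succ_injective _ (hσ hab)
      have hmt : Measurable (fun ω (i : Fin k) => f (σ i.succ) ω) :=
        measurable_pi_lambda _ fun i => hmeas _
      have hpair : IndepFun (f (σ 0)) (fun ω (i : Fin k) => f (σ i.succ) ω) P :=
        aux_indepFun_tuple P f hmeas hind (fun i => σ i.succ) (σ 0)
          (fun i h => (Fin.succ_ne_zero i) (hσ h))
      have hprod : P.map (fun ω => (f (σ 0) ω, fun i : Fin k => f (σ i.succ) ω))
          = μ0.prod (Measure.pi fun _ : Fin k => μ0) := by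
        rw [(indepFun_iff_map_prod_eq_prod_map_map (hmeas _).aemeasurable
          hmt.aemeasurable).mp hpair, (hident (σ 0)).map_eq, ih (fun i => σ i.succ) hσs]
      have htuple : Measurable (fun ω (i : Fin (k+1)) => f (σ i) ω) :=
        measurable_pi_lambda _ fun i => hmeas _
      have hcomp : (⇑e ∘ fun ω (i : Fin (k+1)) => f (σ i) ω) =
          fun ω => (f (σ 0) ω, fun i : Fin k => f (σ i.succ) ω) := by
        funext ω
        show ((fun i : Fin (k+1) => f (σ i) ω) 0,
          fun i : Fin k => (fun i : Fin (k+1) => f (σ i) ω) ((0 : Fin (k+1)).succAbove i)) = _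
        simp [Fin.zero_succAbove]
      have hm := measurePreserving_piFinSuccAbove (fun _ : Fin (k+1) => μ0) 0
      have hmapped : (P.map (fun ω (i : Fin (k+1)) => f (σ i) ω)).map e =
          (Measure.pi (fun _ : Fin (k+1) => μ0)).map e := by
        rw [Measure.map_map e.measurable htuple, hcomp, hprod, hm.map_eq]
      calc P.map (fun ω (i : Fin (k+1)) => f (σ i) ω)
          = ((P.map (fun ω (i : Fin (k+1)) => f (σ i) ω)).map e).map e.symm := by
            rw [Measure.map_map e.symm.measurable e.measurable]
            simp
        _ = ((Measure.pi (fun _ : Fin (k+1) => μ0)).map e).map e.symm := by rw [hmapped]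
        _ = Measure.pi (fun _ : Fin (k+1) => μ0) := by
            rw [Measure.map_map e.symm.measurable e.measurable]
            simp

end TupleLaw
theorem backward_iterations_converge_unique_stationary {Ω : Type*} [MeasurableSpace Ω]
    (P : Measure Ω) [IsProbabilityMeasure P]
    (Ψ : ℕ → Ω → ℝ → ℝ) (A B D L : ℕ → Ω → ℝ)
    (hΨmeas : ∀ n, Measurable (fun p : Ω × ℝ => Ψ n p.1 p.2))
    (hbound : ∀ n ω t, A n ω * t + B n ω - D n ω ≤ Ψ n ω t ∧
        Ψ n ω t ≤ A n ω * max t 0 + max (B n ω) 0 + D n ω)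
    (hLip : ∀ n ω t₁ t₂, |Ψ n ω t₁ - Ψ n ω t₂| ≤ L n ω * |t₁ - t₂|)
    (hAD : ∀ n, ∀ᵐ ω ∂P, 0 ≤ A n ω ∧ 0 ≤ D n ω)
    (hiid : iIndepFun
        (fun n ω => (Ψ n ω, A n ω, B n ω, D n ω, L n ω)) P)
    (hid : ∀ n, IdentDistrib (fun ω => (Ψ n ω, A n ω, B n ω, D n ω, L n ω))
        (fun ω => (Ψ 0 ω, A 0 ω, B 0 ω, D 0 ω, L 0 ω)) P P)
    (hintA : Integrable (fun ω => Real.log (A 0 ω)) P)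
    (hintL : Integrable (fun ω => Real.log (L 0 ω)) P)
    (hmeanL : ∫ ω, Real.log (L 0 ω) ∂P < 0)
    (hintBm : Integrable (fun ω => Real.log (max |B 0 ω - D 0 ω| 1)) P)
    (hintBp : Integrable (fun ω => Real.log (max |B 0 ω + D 0 ω| 1)) P) :
    ∃ R : Ω → ℝ,
      (∀ᵐ ω ∂P, ∀ t : ℝ, Tendsto (fun n => backIter Ψ ω n t) atTop (nhds (R ω))) ∧
      Measure.map (fun p : Ω × Ω => Ψ 0 p.1 (R p.2)) (P.prod P) = Measure.map R P ∧
      (∀ ν : Measure ℝ, IsProbabilityMeasure ν →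
        Measure.map (fun p : Ω × ℝ => Ψ 0 p.1 p.2) (P.prod ν) = ν →
        ν = Measure.map R P) := by
  classical
  -- basic facts
  have hL0 : ∀ n ω, 0 ≤ L n ω := by
    intro n ω
    have h := hLip n ω 1 0
    have h2 : (0:ℝ) ≤ L n ω * |1 - (0:ℝ)| := le_trans (abs_nonneg _) h
    simpa using h2
  have hcont : ∀ n ω, Continuous (Ψ n ω) := by
    intro n ω
    have : LipschitzWith (Real.toNNReal (L n ω)) (Ψ n ω) := by
      apply LipschitzWith.of_dist_le_mul
      intro x y
      rw [Real.dist_eq, Real.dist_eq, Real.coe_toNNReal _ (hL0 n ω)]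
      exact hLip n ω x y
    exact this.continuous
  have hΨm : ∀ n, Measurable (fun ω => Ψ n ω) := by
    intro n
    apply measurable_pi_lambda
    intro t
    exact (hΨmeas n).comp (measurable_id.prodMk measurable_const)
  have hbm : ∀ n, Measurable (fun p : Ω × ℝ => backIter Ψ p.1 n p.2) := by
    intro n
    induction n with
    | zero => exact measurable_snd
    | succ n ih =>
        show Measurable fun p : Ω × ℝ => backIter Ψ p.1 n (Ψ n p.1 p.2)
        exact ih.comp (measurable_fst.prodMk (hΨmeas n))
  have hbm0 : ∀ n, Measurable (fun ω => backIter Ψ ω n 0) :=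
    fun n => (hbm n).comp (measurable_id.prodMk measurable_const)
  -- contraction estimate
  have hcontr : ∀ n ω s t, |backIter Ψ ω n s - backIter Ψ ω n t| ≤
      (∏ k ∈ Finset.range n, L k ω) * |s - t| := by
    intro n ω
    induction n with
    | zero => intro s t; simp [backIter]
    | succ n ih =>
        intro s t
        have h1 := ih (Ψ n ω s) (Ψ n ω t)
        have h2 : |Ψ n ω s - Ψ n ω t| ≤ L n ω * |s - t| := hLip n ω s t
        have h3 : (0:ℝ) ≤ ∏ k ∈ Finset.range n, L k ω :=
          Finset.prod_nonneg fun k _ => hL0 k ω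
        calc |backIter Ψ ω (n+1) s - backIter Ψ ω (n+1) t|
            = |backIter Ψ ω n (Ψ n ω s) - backIter Ψ ω n (Ψ n ω t)| := rfl
          _ ≤ (∏ k ∈ Finset.range n, L k ω) * |Ψ n ω s - Ψ n ω t| := h1
          _ ≤ (∏ k ∈ Finset.range n, L k ω) * (L n ω * |s - t|) := by
              exact mul_le_mul_of_nonneg_left h2 h3
          _ = (∏ k ∈ Finset.range (n+1), L k ω) * |s - t| := by
              rw [Finset.prod_range_succ]; ring
  -- bound at zero
  set X : ℕ → Ω → ℝ := fun n ω =>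
    Real.log (max |B n ω - D n ω| 1) + Real.log (max |B n ω + D n ω| 1) with hXdef
  have hΨ0bound : ∀ n ω, |Ψ n ω 0| ≤ Real.exp (X n ω) := by
    intro n ω
    have h1 : 0 < max |B n ω - D n ω| 1 := lt_of_lt_of_le one_pos (le_max_right _ 1)
    have h2 : 0 < max |B n ω + D n ω| 1 := lt_of_lt_of_le one_pos (le_max_right _ 1)
    have hexp : Real.exp (X n ω) = max |B n ω - D n ω| 1 * max |B n ω + D n ω| 1 := by
      rw [hXdef, Real.exp_add, Real.exp_log h1, Real.exp_log h2]
    rw [hexp]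
    have hb := hbound n ω 0
    have hlow : B n ω - D n ω ≤ Ψ n ω 0 := by
      have := hb.1; linarith [this]
    have hup : Ψ n ω 0 ≤ max (B n ω) 0 + D n ω := by
      have := hb.2; simp only [max_self, mul_zero] at this; linarith [this]
    rw [abs_le]
    constructor
    · have h3 : -(max |B n ω - D n ω| 1 * max |B n ω + D n ω| 1) ≤ -|B n ω - D n ω| := by
        have h4 : |B n ω - D n ω| ≤ max |B n ω - D n ω| 1 * max |B n ω + D n ω| 1 := by
          nlinarith [le_max_left |B n ω - D n ω| 1, le_max_right |B n ω + D n ω| 1,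
            abs_nonneg (B n ω - D n ω), le_max_right |B n ω - D n ω| 1]
        linarith
      have h5 : -|B n ω - D n ω| ≤ B n ω - D n ω := neg_abs_le _
      linarith
    · have h6 : max (B n ω) 0 + D n ω ≤ max |B n ω - D n ω| |B n ω + D n ω| := by
        rcases le_or_gt 0 (B n ω) with hB | hB
        · have : B n ω + D n ω ≤ |B n ω + D n ω| := le_abs_self _
          have hmax : max (B n ω) 0 = B n ω := max_eq_left hB
          rw [hmax]
          exact le_trans this (le_max_right _ _)
        · have hmax : max (B n ω) 0 = 0 := max_eq_right hB.le
          rw [hmax, zero_add]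
          have : D n ω ≤ D n ω - B n ω := by linarith
          have h7 : D n ω - B n ω ≤ |B n ω - D n ω| := by
            rw [abs_sub_comm]; exact le_abs_self _
          exact le_trans (le_trans this h7) (le_max_left _ _)
      have h8 : max |B n ω - D n ω| |B n ω + D n ω| ≤
          max |B n ω - D n ω| 1 * max |B n ω + D n ω| 1 := by
        rcases max_cases |B n ω - D n ω| |B n ω + D n ω| with ⟨hm, _⟩ | ⟨hm, _⟩ <;> rw [hm]
        · nlinarith [le_max_left |B n ω - D n ω| 1, le_max_right |B n ω + D n ω| 1,
            abs_nonneg (B n ω - D n ω)]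
        · nlinarith [le_max_right |B n ω - D n ω| 1, le_max_left |B n ω + D n ω| 1,
            abs_nonneg (B n ω + D n ω)]
      linarith
  -- strong laws
  have hprojL : Measurable (fun x : (ℝ → ℝ) × ℝ × ℝ × ℝ × ℝ => x.2.2.2.2) :=
    measurable_snd.snd.snd.snd
  have gmL : Measurable (fun x : (ℝ → ℝ) × ℝ × ℝ × ℝ × ℝ => Real.log x.2.2.2.2) :=
    Real.measurable_log.comp hprojL
  have hmb : Measurable (fun x : (ℝ → ℝ) × ℝ × ℝ × ℝ × ℝ => x.2.2.1) := measurable_snd.snd.fst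
  have hmd : Measurable (fun x : (ℝ → ℝ) × ℝ × ℝ × ℝ × ℝ => x.2.2.2.1) :=
    measurable_snd.snd.snd.fst
  have gmX : Measurable (fun x : (ℝ → ℝ) × ℝ × ℝ × ℝ × ℝ =>
      Real.log (max |x.2.2.1 - x.2.2.2.1| 1) + Real.log (max |x.2.2.1 + x.2.2.2.1| 1)) :=
    ((Real.measurable_log.comp (((hmb.sub hmd).abs).max measurable_const)).add
      (Real.measurable_log.comp (((hmb.add hmd).abs).max measurable_const)))
  have hslnL : ∀ᵐ ω ∂P, Tendsto (fun n : ℕ => (n : ℝ)⁻¹ •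
      ∑ i ∈ Finset.range n, Real.log (L i ω)) atTop (nhds (P[fun ω => Real.log (L 0 ω)])) := by
    apply strong_law_ae
    · exact hintL
    · intro i j hij
      exact (hiid.indepFun hij).comp gmL gmL
    · intro i
      exact (hid i).comp gmL
  have hslnX : ∀ᵐ ω ∂P, Tendsto (fun n : ℕ => (n : ℝ)⁻¹ •
      ∑ i ∈ Finset.range n, X i ω) atTop (nhds (P[X 0])) := by
    apply strong_law_ae
    · exact hintBm.add hintBp
    · intro i j hij
      exact (hiid.indepFun hij).comp gmX gmX
    · intro i
      exact (hid i).comp gmX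
  have hXn : ∀ᵐ ω ∂P, Tendsto (fun n : ℕ => X n ω / n) atTop (nhds 0) := by
    filter_upwards [hslnX] with ω hω
    set c := P[X 0]
    have h2 : Tendsto (fun n : ℕ => ((n + 1 : ℕ) : ℝ)⁻¹ •
        ∑ i ∈ Finset.range (n + 1), X i ω) atTop (nhds c) := hω.comp (tendsto_add_atTop_nat 1)
    have h1 : Tendsto (fun n : ℕ => ((n : ℝ) + 1) / n) atTop (nhds 1) := by
      have ha := tendsto_one_div_atTop_nhds_zero_nat (𝕜 := ℝ)
      have hb : Tendsto (fun _ : ℕ => (1:ℝ)) atTop (nhds 1) := tendsto_const_nhds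
      have hc := hb.add ha
      rw [add_zero] at hc
      apply hc.congr'
      filter_upwards [eventually_ge_atTop 1] with n hn
      have hn0 : (n : ℝ) ≠ 0 := Nat.cast_ne_zero.mpr (by omega)
      field_simp
    have h3 := (h2.mul h1).sub hω
    rw [mul_one, sub_self] at h3
    apply h3.congr'
    filter_upwards [eventually_ge_atTop 1] with n hn
    have hn0 : (n : ℝ) ≠ 0 := Nat.cast_ne_zero.mpr (by omega)
    have hn1 : ((n:ℝ) + 1) ≠ 0 := by positivity
    rw [Finset.sum_range_succ, smul_eq_mul, smul_eq_mul]
    push_cast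
    field_simp
    ring
  -- key almost sure facts
  have hkey : ∀ᵐ ω ∂P, Tendsto (fun n => ∏ k ∈ Finset.range n, L k ω) atTop (nhds 0) ∧
      Summable (fun n => (∏ k ∈ Finset.range n, L k ω) * |Ψ n ω 0|) := by
    filter_upwards [hslnL, hXn] with ω hLa hXa
    by_cases hz : ∃ k, L k ω = 0
    · obtain ⟨k0, hk0⟩ := hz
      have hzero : ∀ n, k0 < n → ∏ k ∈ Finset.range n, L k ω = 0 := fun n hn =>
        Finset.prod_eq_zero (Finset.mem_range.mpr hn) hk0
      constructor
      · apply Tendsto.congr' _ tendsto_const_nhds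
        filter_upwards [eventually_gt_atTop k0] with n hn
        exact (hzero n hn).symm
      · apply summable_of_ne_finset_zero (s := Finset.range (k0 + 1))
        intro n hn
        rw [hzero n (by simpa using hn), zero_mul]
    · push_neg at hz
      have hpos : ∀ k, 0 < L k ω := fun k => (hL0 k ω).lt_of_ne (Ne.symm (hz k))
      have hprodexp : ∀ n, ∏ k ∈ Finset.range n, L k ω =
          Real.exp (∑ k ∈ Finset.range n, Real.log (L k ω)) := by
        intro n
        rw [Real.exp_sum]
        exact Finset.prod_congr rfl fun k _ => (Real.exp_log (hpos k)).symm
      set mL := P[fun ω => Real.log (L 0 ω)] with hmLdef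
      have hmL : mL < 0 := hmeanL
      have hev1 : ∀ᶠ n : ℕ in atTop,
          ∑ k ∈ Finset.range n, Real.log (L k ω) ≤ n * (mL / 2) := by
        have h2 : ∀ᶠ n : ℕ in atTop,
            (n : ℝ)⁻¹ • ∑ k ∈ Finset.range n, Real.log (L k ω) < mL / 2 :=
          (tendsto_order.1 hLa).2 _ (by linarith)
        filter_upwards [h2, eventually_ge_atTop 1] with n hn hn1
        have hn0 : (0 : ℝ) < n := by
          have : (1 : ℝ) ≤ n := by exact_mod_cast hn1
          linarith
        rw [smul_eq_mul] at hn
        have := mul_le_mul_of_nonneg_left hn.le hn0.le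
        calc ∑ k ∈ Finset.range n, Real.log (L k ω)
            = (n : ℝ) * ((n : ℝ)⁻¹ * ∑ k ∈ Finset.range n, Real.log (L k ω)) := by
              field_simp
          _ ≤ (n : ℝ) * (mL / 2) := this
      have hev2 : ∀ᶠ n : ℕ in atTop, X n ω ≤ n * (-mL / 4) := by
        have h2 : ∀ᶠ n : ℕ in atTop, X n ω / n < -mL / 4 :=
          (tendsto_order.1 hXa).2 _ (by linarith)
        filter_upwards [h2, eventually_ge_atTop 1] with n hn hn1
        have hn0 : (0 : ℝ) < n := by
          have : (1 : ℝ) ≤ n := by exact_mod_cast hn1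
          linarith
        have := mul_le_mul_of_nonneg_left hn.le hn0.le
        calc X n ω = (n : ℝ) * (X n ω / n) := by field_simp
          _ ≤ (n : ℝ) * (-mL / 4) := this
      constructor
      · have hsum_bot : Tendsto (fun n => ∑ k ∈ Finset.range n, Real.log (L k ω))
            atTop atBot := by
          apply tendsto_atBot_mono' atTop hev1
          exact Tendsto.atTop_mul_neg (by linarith : mL / 2 < 0)
            tendsto_natCast_atTop_atTop tendsto_const_nhds
        have := Real.tendsto_exp_atBot.comp hsum_bot
        exact Tendsto.congr (fun n => (hprodexp n).symm) this
      · set r := Real.exp (mL / 4) with hrdef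
        have hr0 : 0 ≤ r := (Real.exp_pos _).le
        have hr1 : r < 1 := Real.exp_lt_one_iff.mpr (by linarith)
        obtain ⟨N, hN⟩ := (hev1.and hev2).exists_forall_of_atTop
        have hle : ∀ n, N ≤ n → (∏ k ∈ Finset.range n, L k ω) * |Ψ n ω 0| ≤ r ^ n := by
          intro n hn
          obtain ⟨ha, hb⟩ := hN n hn
          have hbd := hΨ0bound n ω
          have h5 : (∏ k ∈ Finset.range n, L k ω) * |Ψ n ω 0| ≤
              Real.exp (∑ k ∈ Finset.range n, Real.log (L k ω)) * Real.exp (X n ω) := by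
            rw [← hprodexp n]
            exact mul_le_mul_of_nonneg_left hbd (Finset.prod_nonneg fun k _ => hL0 k ω)
          rw [← Real.exp_add] at h5
          have h6 : ∑ k ∈ Finset.range n, Real.log (L k ω) + X n ω ≤ n * (mL / 4) := by
            have : (n : ℝ) * (mL / 2) + n * (-mL / 4) = n * (mL / 4) := by ring
            linarith
          calc (∏ k ∈ Finset.range n, L k ω) * |Ψ n ω 0|
              ≤ Real.exp (∑ k ∈ Finset.range n, Real.log (L k ω) + X n ω) := h5
            _ ≤ Real.exp ((n : ℝ) * (mL / 4)) := Real.exp_le_exp.mpr h6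
            _ = r ^ n := Real.exp_nat_mul _ n
        apply (summable_nat_add_iff N).mp
        have hgeom : Summable (fun n : ℕ => r ^ (n + N)) := by
          have := (summable_geometric_of_lt_one hr0 hr1).mul_right (r ^ N)
          simpa [pow_add] using this
        apply Summable.of_nonneg_of_le _ _ hgeom
        · intro n
          exact mul_nonneg (Finset.prod_nonneg fun k _ => hL0 k ω) (abs_nonneg _)
        · intro n
          exact hle (n + N) (by omega)
  -- convergence of the backward iteration at 0
  have hconv : ∀ᵐ ω ∂P, ∃ l, Tendsto (fun n => backIter Ψ ω n 0) atTop (nhds l) := by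
    filter_upwards [hkey] with ω hk
    have hc : CauchySeq (fun n => backIter Ψ ω n 0) := by
      apply cauchySeq_of_dist_le_of_summable _ _ hk.2
      intro n
      rw [Real.dist_eq]
      calc |backIter Ψ ω n 0 - backIter Ψ ω (n + 1) 0|
          = |backIter Ψ ω n 0 - backIter Ψ ω n (Ψ n ω 0)| := rfl
        _ ≤ (∏ k ∈ Finset.range n, L k ω) * |0 - Ψ n ω 0| := hcontr n ω 0 (Ψ n ω 0)
        _ = (∏ k ∈ Finset.range n, L k ω) * |Ψ n ω 0| := by rw [zero_sub, abs_neg]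
    exact cauchySeq_tendsto_of_complete hc
  obtain ⟨R, hRmeas, hR0⟩ := measurable_limit_of_tendsto_metrizable_ae
    (fun n => (hbm0 n).aemeasurable) hconv
  have hRall : ∀ᵐ ω ∂P, ∀ t : ℝ, Tendsto (fun n => backIter Ψ ω n t) atTop (nhds (R ω)) := by
    filter_upwards [hR0, hkey] with ω h0 hk
    intro t
    have hdiff : Tendsto (fun n => backIter Ψ ω n t - backIter Ψ ω n 0) atTop (nhds 0) := by
      refine squeeze_zero_norm (a := fun n => (∏ k ∈ Finset.range n, L k ω) * |t|)
        (fun n => ?_) ?_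
      · calc ‖backIter Ψ ω n t - backIter Ψ ω n 0‖
            ≤ (∏ k ∈ Finset.range n, L k ω) * |t - 0| := hcontr n ω t 0
          _ = (∏ k ∈ Finset.range n, L k ω) * |t| := by rw [sub_zero]
      · have := hk.1.mul_const |t|
        simpa using this
    have := h0.add hdiff
    rw [add_zero] at this
    apply this.congr
    intro n
    ring
  -- setup for distributional identities
  have hiidΨ : iIndepFun (fun n (ω : Ω) => Ψ n ω) P := by
    have := hiid.comp (fun _ => Prod.fst) (fun _ => measurable_fst)
    exact this
  have hidΨ : ∀ n, IdentDistrib (fun ω => Ψ n ω) (fun ω => Ψ 0 ω) P P :=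
    fun n => (hid n).comp measurable_fst
  set μF := P.map (fun ω => Ψ 0 ω) with hμFdef
  have htuple : ∀ (k : ℕ) (σ : Fin k → ℕ), Function.Injective σ →
      P.map (fun ω (i : Fin k) => Ψ (σ i) ω) = Measure.pi (fun _ : Fin k => μF) :=
    fun k σ hσ => aux_tuple_law P (fun n ω => Ψ n ω) hΨm hiidΨ hidΨ k σ hσ
  have hbeq : ∀ n ω t, backIter Ψ ω n t = finComp (fun i : Fin n => Ψ i ω) t := by
    intro n ω
    induction n with
    | zero => intro t; rfl
    | succ n ih =>
        intro t
        have h1 : backIter Ψ ω (n+1) t = backIter Ψ ω n (Ψ n ω t) := rfl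
        rw [h1, ih (Ψ n ω t), finComp_succ_last (fun i : Fin (n+1) => Ψ i ω) t]
        simp
  -- the key functional
  have hϑmeas : ∀ (n m : ℕ), Measurable (fun q : (ℝ → ℝ) × (Fin n → ℝ → ℝ) =>
      q.1 (rnd m (finRComp m q.2 0))) := by
    intro n m
    have h1 : Measurable (fun q : (ℝ → ℝ) × (Fin n → ℝ → ℝ) => finRComp m q.2 (0:ℝ)) :=
      (measurable_finRComp m n).comp (measurable_snd.prodMk measurable_const)
    exact (measurable_rnd_eval m).comp (measurable_fst.prodMk h1)
  -- H1 : law identity at each finite stage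
  have H1 : ∀ n : ℕ, (P.prod P).map (fun p : Ω × Ω => Ψ 0 p.1 (backIter Ψ p.2 n 0)) =
      P.map (fun ω => backIter Ψ ω (n+1) 0) := by
    intro n
    set pairP : Ω → (ℝ → ℝ) × (Fin n → ℝ → ℝ) :=
      fun ω => (Ψ 0 ω, fun i : Fin n => Ψ (i + 1) ω) with hpairP
    set pairPP : Ω × Ω → (ℝ → ℝ) × (Fin n → ℝ → ℝ) :=
      fun p => (Ψ 0 p.1, fun i : Fin n => Ψ i p.2) with hpairPP
    have hmt1 : Measurable (fun ω (i : Fin n) => Ψ (i + 1 : ℕ) ω) :=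
      measurable_pi_lambda _ fun i => hΨm _
    have hmt0 : Measurable (fun ω (i : Fin n) => Ψ (i : ℕ) ω) :=
      measurable_pi_lambda _ fun i => hΨm _
    have hmeasP : Measurable pairP := (hΨm 0).prodMk hmt1
    have hmeasPP : Measurable pairPP :=
      ((hΨm 0).comp measurable_fst).prodMk (hmt0.comp measurable_snd)
    have hlawP : P.map pairP = μF.prod (Measure.pi (fun _ : Fin n => μF)) := by
      have hindep : IndepFun (fun ω => Ψ 0 ω) (fun ω (i : Fin n) => Ψ (i + 1 : ℕ) ω) P := by
        have := aux_indepFun_tuple P (fun n ω => Ψ n ω) hΨm hiidΨ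
          (fun i : Fin n => (i : ℕ) + 1) 0 (fun i => Nat.succ_ne_zero _)
        exact this
      rw [hpairP]
      have := (indepFun_iff_map_prod_eq_prod_map_map (μ := P)
        ((hΨm 0).aemeasurable) hmt1.aemeasurable).mp hindep
      rw [this, htuple n (fun i : Fin n => (i : ℕ) + 1)
        (fun a b hab => Fin.val_injective (by have h := hab; simp only [] at h; omega))]
    have hlawPP : (P.prod P).map pairPP = μF.prod (Measure.pi (fun _ : Fin n => μF)) := by
      have h1 : pairPP = Prod.map (fun ω => Ψ 0 ω) (fun ω (i : Fin n) => Ψ (i : ℕ) ω) := rfl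
      rw [h1, ← Measure.map_prod_map _ _ (hΨm 0) hmt0,
        htuple n (fun i : Fin n => (i : ℕ)) Fin.val_injective]
    apply aux_mapEq_of_tendsto (P.prod P) P
      (f := fun m p => (pairPP p).1 (rnd m (finRComp m (pairPP p).2 0)))
      (g := fun m ω => (pairP ω).1 (rnd m (finRComp m (pairP ω).2 0)))
    · exact fun m => ((hϑmeas n m).comp hmeasPP).aemeasurable
    · exact fun m => ((hϑmeas n m).comp hmeasP).aemeasurable
    · exact ((hΨmeas 0).comp (measurable_fst.prodMk
        ((hbm0 n).comp measurable_snd))).aemeasurable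
    · exact (hbm0 (n+1)).aemeasurable
    · refine Eventually.of_forall (fun p => ?_)
      have hinner : Tendsto (fun m => finRComp m (fun i : Fin n => Ψ i p.2) 0) atTop
          (nhds (finComp (fun i : Fin n => Ψ i p.2) 0)) :=
        finRComp_tendsto (fun i => hcont _ _) tendsto_const_nhds
      have h2 := rnd_tendsto hinner
      have h3 := ((hcont 0 p.1).tendsto _).comp h2
      rw [← hbeq n p.2 0] at h3
      exact h3
    · refine Eventually.of_forall (fun ω => ?_)
      have h4 : ∀ m, (pairP ω).1 (rnd m (finRComp m (pairP ω).2 0)) =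
          finRComp m (fun i : Fin (n+1) => Ψ i ω) 0 := by
        intro m
        rfl
      have hlim : Tendsto (fun m => finRComp m (fun i : Fin (n+1) => Ψ i ω) 0) atTop
          (nhds (finComp (fun i : Fin (n+1) => Ψ i ω) 0)) :=
        finRComp_tendsto (fun i => hcont _ _) tendsto_const_nhds
      rw [← hbeq (n+1) ω 0] at hlim
      exact Tendsto.congr (fun m => (h4 m).symm) hlim
    · intro m
      have hc1 : (fun p => (pairPP p).1 (rnd m (finRComp m (pairPP p).2 0))) =
          (fun q : (ℝ → ℝ) × (Fin n → ℝ → ℝ) => q.1 (rnd m (finRComp m q.2 0))) ∘ pairPP := rfl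
      have hc2 : (fun ω => (pairP ω).1 (rnd m (finRComp m (pairP ω).2 0))) =
          (fun q : (ℝ → ℝ) × (Fin n → ℝ → ℝ) => q.1 (rnd m (finRComp m q.2 0))) ∘ pairP := rfl
      rw [hc1, hc2, ← Measure.map_map (hϑmeas n m) hmeasPP,
        ← Measure.map_map (hϑmeas n m) hmeasP, hlawP, hlawPP]
  refine ⟨R, hRall, ?_, ?_⟩
  · -- stationarity of the law of R
    have hmapsnd : (P.prod P).map Prod.snd = P := by
      rw [Measure.map_snd_prod]; simp
    have haeProd : ∀ᵐ p : Ω × Ω ∂(P.prod P),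
        ∀ t : ℝ, Tendsto (fun k => backIter Ψ p.2 k t) atTop (nhds (R p.2)) := by
      have := ae_of_ae_map (μ := P.prod P)
        (p := fun ω : Ω => ∀ t : ℝ, Tendsto (fun k => backIter Ψ ω k t) atTop (nhds (R ω)))
        (measurable_snd.aemeasurable) (by rw [hmapsnd]; exact hRall)
      exact this
    apply aux_mapEq_of_tendsto (P.prod P) P
      (f := fun n p => Ψ 0 p.1 (backIter Ψ p.2 n 0))
      (g := fun n ω => backIter Ψ ω (n+1) 0)
    · exact fun n => ((hΨmeas 0).comp (measurable_fst.prodMk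
        ((hbm0 n).comp measurable_snd))).aemeasurable
    · exact fun n => (hbm0 (n+1)).aemeasurable
    · exact ((hΨmeas 0).comp (measurable_fst.prodMk
        (hRmeas.comp measurable_snd))).aemeasurable
    · exact hRmeas.aemeasurable
    · filter_upwards [haeProd] with p hp
      exact ((hcont 0 p.1).tendsto _).comp (hp 0)
    · filter_upwards [hR0] with ω h0
      exact h0.comp (tendsto_add_atTop_nat 1)
    · exact H1
  · -- uniqueness of the stationary law
    intro ν hν hstat
    have hmapfst : (P.prod ν).map Prod.fst = P := by
      rw [Measure.map_fst_prod]; simp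
    -- the iterated stationarity
    have Q : ∀ n : ℕ, (P.prod ν).map (fun p : Ω × ℝ => backIter Ψ p.1 n p.2) = ν := by
      intro n
      induction n with
      | zero =>
          have : (fun p : Ω × ℝ => backIter Ψ p.1 0 p.2) = Prod.snd := rfl
          rw [this, Measure.map_snd_prod]; simp
      | succ n ih =>
          -- rounded functional on ((Fin n → ℝ→ℝ) × (ℝ→ℝ)) × ℝ
          have hWmeas : ∀ m : ℕ, Measurable
              (fun q : ((Fin n → ℝ → ℝ) × (ℝ → ℝ)) × ℝ =>
                finRComp m q.1.1 (rnd m (q.1.2 (rnd m q.2)))) := by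
            intro m
            have h1 : Measurable (fun q : ((Fin n → ℝ → ℝ) × (ℝ → ℝ)) × ℝ =>
                q.1.2 (rnd m q.2)) :=
              (measurable_rnd_eval m).comp ((measurable_snd.comp measurable_fst).prodMk
                measurable_snd)
            have h2 : Measurable (fun q : ((Fin n → ℝ → ℝ) × (ℝ → ℝ)) × ℝ =>
                rnd m (q.1.2 (rnd m q.2))) := by
              have hcast : Measurable (fun j : ℤ => ((j : ℝ) / 2 ^ m : ℝ)) :=
                measurable_from_top
              have hrm : Measurable (rnd m) :=
                hcast.comp ((Int.measurable_floor).comp (measurable_id.mul measurable_const))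
              exact hrm.comp h1
            exact (measurable_finRComp m n).comp
              (((measurable_fst.comp measurable_fst)).prodMk h2)
          set ξ : Ω × ℝ → ((Fin n → ℝ → ℝ) × (ℝ → ℝ)) × ℝ :=
            fun p => (((fun i : Fin n => Ψ i p.1), Ψ n p.1), p.2) with hξdef
          set ζ : Ω × (Ω × ℝ) → ((Fin n → ℝ → ℝ) × (ℝ → ℝ)) × ℝ :=
            fun q => (((fun i : Fin n => Ψ i q.1), Ψ 0 q.2.1), q.2.2) with hζdef
          have hmt0 : Measurable (fun ω (i : Fin n) => Ψ (i : ℕ) ω) :=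
            measurable_pi_lambda _ fun i => hΨm _
          have hξmeas : Measurable ξ :=
            ((hmt0.comp measurable_fst).prodMk ((hΨm n).comp measurable_fst)).prodMk
              measurable_snd
          have hζmeas : Measurable ζ :=
            ((hmt0.comp measurable_fst).prodMk
              ((hΨm 0).comp (measurable_fst.comp measurable_snd))).prodMk
              (measurable_snd.comp measurable_snd)
          have hpairlaw : P.map (fun ω => ((fun i : Fin n => Ψ i ω), Ψ n ω)) =
              (Measure.pi (fun _ : Fin n => μF)).prod μF := by
            have hindep : IndepFun (fun ω (i : Fin n) => Ψ (i : ℕ) ω) (fun ω => Ψ n ω) P := by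
              have := aux_indepFun_tuple P (fun k ω => Ψ k ω) hΨm hiidΨ
                (fun i : Fin n => (i : ℕ)) n (fun i => Nat.ne_of_lt i.isLt)
              exact this.symm
            have := (indepFun_iff_map_prod_eq_prod_map_map (μ := P)
              hmt0.aemeasurable (hΨm n).aemeasurable).mp hindep
            rw [this, htuple n (fun i : Fin n => (i : ℕ)) Fin.val_injective, (hidΨ n).map_eq]
          have hξlaw : (P.prod ν).map ξ =
              ((Measure.pi (fun _ : Fin n => μF)).prod μF).prod ν := by
            have h1 : ξ = Prod.map (fun ω => ((fun i : Fin n => Ψ i ω), Ψ n ω)) id := rfl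
            rw [h1, ← Measure.map_prod_map _ _ (hmt0.prodMk (hΨm n)) measurable_id,
              hpairlaw, Measure.map_id]
          have hζlaw : (P.prod (P.prod ν)).map ζ =
              ((Measure.pi (fun _ : Fin n => μF)).prod μF).prod ν := by
            set e : (((Fin n → ℝ → ℝ) × (ℝ → ℝ)) × ℝ) ≃ᵐ
                ((Fin n → ℝ → ℝ) × ((ℝ → ℝ) × ℝ)) := MeasurableEquiv.prodAssoc with hedef
            set big : Ω × (Ω × ℝ) → (Fin n → ℝ → ℝ) × ((ℝ → ℝ) × ℝ) :=
              Prod.map (fun ω (i : Fin n) => Ψ (i : ℕ) ω)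
                (Prod.map (fun ω => Ψ 0 ω) (id : ℝ → ℝ)) with hbigdef
            have hbigmeas : Measurable big :=
              hmt0.prodMap ((hΨm 0).prodMap measurable_id)
            have hstep1 : (P.prod (P.prod ν)).map big =
                (Measure.pi (fun _ : Fin n => μF)).prod (μF.prod ν) := by
              rw [hbigdef, ← Measure.map_prod_map _ _ hmt0 ((hΨm 0).prodMap measurable_id),
                ← Measure.map_prod_map _ _ (hΨm 0) measurable_id, Measure.map_id,
                htuple n (fun i : Fin n => (i : ℕ)) Fin.val_injective]
            have hζcomp : ζ = ⇑e.symm ∘ big := rfl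
            have h2 := Measure.prodAssoc_prod (μ := Measure.pi (fun _ : Fin n => μF))
              (ν := μF) (τ := ν)
            calc (P.prod (P.prod ν)).map ζ
                = ((P.prod (P.prod ν)).map big).map e.symm := by
                  rw [Measure.map_map e.symm.measurable hbigmeas, ← hζcomp]
              _ = ((Measure.pi (fun _ : Fin n => μF)).prod (μF.prod ν)).map e.symm := by
                  rw [hstep1]
              _ = (((((Measure.pi (fun _ : Fin n => μF)).prod μF).prod ν).map e).map e.symm) := by
                  rw [h2]
              _ = ((Measure.pi (fun _ : Fin n => μF)).prod μF).prod ν := by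
                  rw [Measure.map_map e.symm.measurable e.measurable]
                  simp
          have hstat' : (P.prod (P.prod ν)).map
              (fun q : Ω × (Ω × ℝ) => (q.1, Ψ 0 q.2.1 q.2.2)) = P.prod ν := by
            have h1 : (fun q : Ω × (Ω × ℝ) => (q.1, Ψ 0 q.2.1 q.2.2)) =
                Prod.map (id : Ω → Ω) (fun p : Ω × ℝ => Ψ 0 p.1 p.2) := rfl
            rw [h1, ← Measure.map_prod_map _ _ measurable_id (hΨmeas 0), hstat,
              Measure.map_id]
          have hmain : (P.prod ν).map (fun p : Ω × ℝ => backIter Ψ p.1 (n+1) p.2) =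
              (P.prod (P.prod ν)).map
                (fun q : Ω × (Ω × ℝ) => backIter Ψ q.1 n (Ψ 0 q.2.1 q.2.2)) := by
            apply aux_mapEq_of_tendsto (P.prod ν) (P.prod (P.prod ν))
              (f := fun m p => finRComp m (ξ p).1.1 (rnd m ((ξ p).1.2 (rnd m (ξ p).2))))
              (g := fun m q => finRComp m (ζ q).1.1 (rnd m ((ζ q).1.2 (rnd m (ζ q).2))))
            · exact fun m => ((hWmeas m).comp hξmeas).aemeasurable
            · exact fun m => ((hWmeas m).comp hζmeas).aemeasurable
            · exact ((hbm (n+1)).aemeasurable)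
            · exact ((hbm n).comp ((measurable_fst).prodMk
                ((hΨmeas 0).comp measurable_snd))).aemeasurable
            · refine Eventually.of_forall (fun p => ?_)
              have h0 : Tendsto (fun m => rnd m ((p.2 : ℝ))) atTop (nhds p.2) :=
                rnd_tendsto tendsto_const_nhds
              have h1 : Tendsto (fun m => Ψ n p.1 (rnd m p.2)) atTop
                  (nhds (Ψ n p.1 p.2)) := ((hcont n p.1).tendsto _).comp h0
              have h2 := rnd_tendsto h1
              have h3 : Tendsto (fun m => finRComp m (fun i : Fin n => Ψ i p.1)
                  (rnd m (Ψ n p.1 (rnd m p.2)))) atTop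
                  (nhds (finComp (fun i : Fin n => Ψ i p.1) (Ψ n p.1 p.2))) :=
                finRComp_tendsto (fun i => hcont _ _) h2
              have h4 : finComp (fun i : Fin n => Ψ i p.1) (Ψ n p.1 p.2) =
                  backIter Ψ p.1 (n+1) p.2 := by
                rw [hbeq (n+1) p.1 p.2, finComp_succ_last (fun i : Fin (n+1) => Ψ i p.1) p.2]
                rfl
              rw [h4] at h3
              exact h3
            · refine Eventually.of_forall (fun q => ?_)
              have h0 : Tendsto (fun m => rnd m ((q.2.2 : ℝ))) atTop (nhds q.2.2) :=
                rnd_tendsto tendsto_const_nhds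
              have h1 : Tendsto (fun m => Ψ 0 q.2.1 (rnd m q.2.2)) atTop
                  (nhds (Ψ 0 q.2.1 q.2.2)) := ((hcont 0 q.2.1).tendsto _).comp h0
              have h2 := rnd_tendsto h1
              have h3 : Tendsto (fun m => finRComp m (fun i : Fin n => Ψ i q.1)
                  (rnd m (Ψ 0 q.2.1 (rnd m q.2.2)))) atTop
                  (nhds (finComp (fun i : Fin n => Ψ i q.1) (Ψ 0 q.2.1 q.2.2))) :=
                finRComp_tendsto (fun i => hcont _ _) h2
              rw [← hbeq n q.1 (Ψ 0 q.2.1 q.2.2)] at h3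
              exact h3
            · intro m
              have hc1 : (fun p => finRComp m (ξ p).1.1 (rnd m ((ξ p).1.2 (rnd m (ξ p).2)))) =
                  (fun q : ((Fin n → ℝ → ℝ) × (ℝ → ℝ)) × ℝ =>
                    finRComp m q.1.1 (rnd m (q.1.2 (rnd m q.2)))) ∘ ξ := rfl
              have hc2 : (fun q => finRComp m (ζ q).1.1 (rnd m ((ζ q).1.2 (rnd m (ζ q).2)))) =
                  (fun q : ((Fin n → ℝ → ℝ) × (ℝ → ℝ)) × ℝ =>
                    finRComp m q.1.1 (rnd m (q.1.2 (rnd m q.2)))) ∘ ζ := rfl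
              rw [hc1, hc2, ← Measure.map_map (hWmeas m) hξmeas,
                ← Measure.map_map (hWmeas m) hζmeas, hξlaw, hζlaw]
          rw [hmain]
          have hinner : Measurable (fun q : Ω × (Ω × ℝ) => (q.1, Ψ 0 q.2.1 q.2.2)) :=
            measurable_fst.prodMk ((hΨmeas 0).comp measurable_snd)
          have hcompose : (fun q : Ω × (Ω × ℝ) => backIter Ψ q.1 n (Ψ 0 q.2.1 q.2.2)) =
              (fun p : Ω × ℝ => backIter Ψ p.1 n p.2) ∘
                (fun q : Ω × (Ω × ℝ) => (q.1, Ψ 0 q.2.1 q.2.2)) := rfl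
          rw [hcompose, ← Measure.map_map (hbm n) hinner, hstat', ih]
    -- pass to the limit
    have haefst : ∀ᵐ p : Ω × ℝ ∂(P.prod ν),
        ∀ t : ℝ, Tendsto (fun k => backIter Ψ p.1 k t) atTop (nhds (R p.1)) := by
      have := ae_of_ae_map (μ := P.prod ν)
        (p := fun ω : Ω => ∀ t : ℝ, Tendsto (fun k => backIter Ψ ω k t) atTop (nhds (R ω)))
        (measurable_fst.aemeasurable) (by rw [hmapfst]; exact hRall)
      exact this
    have hfinal : (P.prod ν).map (fun p : Ω × ℝ => R p.1) = ν.map id := by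
      apply aux_mapEq_of_tendsto (P.prod ν) ν
        (f := fun n p => backIter Ψ p.1 n p.2) (g := fun _ x => x)
      · exact fun n => (hbm n).aemeasurable
      · exact fun n => aemeasurable_id
      · exact (hRmeas.comp measurable_fst).aemeasurable
      · exact aemeasurable_id
      · filter_upwards [haefst] with p hp
        exact hp p.2
      · exact Eventually.of_forall (fun x => tendsto_const_nhds)
      · intro n
        rw [Q n]
        exact Measure.map_id.symm
    rw [Measure.map_id] at hfinal
    have h5 : (P.prod ν).map (fun p : Ω × ℝ => R p.1) = P.map R := by
      have : (fun p : Ω × ℝ => R p.1) = R ∘ Prod.fst := rfl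
      rw [this, ← Measure.map_map hRmeas measurable_fst, hmapfst]
    rw [← hfinal, h5]
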